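/- If A and X are n×n complex matrices such that the spectral radius ρ(I − A*X) < 1, then A is invertible and the sequence X_{k+1} = X_k * ∑_{λ=0}^{r−1} (I − A*X_k)^λ (with X_0 = X, fixed r ≥ 2) converges to A⁻¹. -/

import Mathlib

open Filter

/-- In a complex Banach algebra, if the spectral radius of `a` is less than one,
then the powers of `a` tend to zero. -/
lemma pow_tendsto_zero_of_spectralRadius_lt_one {𝔸 : Type*} [NormedRing 𝔸]
    [NormedAlgebra ℂ 𝔸] [CompleteSpace 𝔸] (a : 𝔸) (h : spectralRadius ℂ a < 1) :
    Tendsto (fun m : ℕ => a ^ m) atTop (nhds 0) := by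
  obtain ⟨c, hc1, hc2⟩ := ENNReal.lt_iff_exists_nnreal_btwn.mp h
  have hgel := spectrum.pow_nnnorm_pow_one_div_tendsto_nhds_spectralRadius a
  have hev : ∀ᶠ m : ℕ in atTop, (‖a ^ m‖₊ : ENNReal) ^ (1 / (m : ℝ)) < (c : ENNReal) :=
    hgel.eventually_lt_const hc1
  rw [tendsto_zero_iff_norm_tendsto_zero]
  have hc2' : (c : ℝ) < 1 := by exact_mod_cast hc2
  refine squeeze_zero' (Eventually.of_forall fun m => norm_nonneg _) ?_
    (tendsto_pow_atTop_nhds_zero_of_lt_one c.coe_nonneg hc2')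
  filter_upwards [hev, eventually_ge_atTop 1] with m hm hm1
  have hmr : (0 : ℝ) < m := by exact_mod_cast hm1
  have key : (‖a ^ m‖₊ : ENNReal) < (c : ENNReal) ^ (m : ℝ) := by
    calc (‖a ^ m‖₊ : ENNReal)
        = ((‖a ^ m‖₊ : ENNReal) ^ (1 / (m : ℝ))) ^ (m : ℝ) := by
          rw [← ENNReal.rpow_mul, one_div, inv_mul_cancel₀ (ne_of_gt hmr),
            ENNReal.rpow_one]
      _ < (c : ENNReal) ^ (m : ℝ) := ENNReal.rpow_lt_rpow hm hmr
  have key2 : ‖a ^ m‖₊ < c ^ m := by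
    rw [ENNReal.rpow_natCast, ← ENNReal.coe_pow, ENNReal.coe_lt_coe] at key
    exact key
  calc ‖a ^ m‖ ≤ ((c ^ m : NNReal) : ℝ) := le_of_lt key2
    _ = (c : ℝ) ^ m := by push_cast; ring

/-- If `ρ(I − A X) < 1`, then `A` is invertible and the order-`r` hyper-power
iteration starting from `X` converges to `A⁻¹`. -/
theorem stmt10 {n : ℕ} (A X : Matrix (Fin n) (Fin n) ℂ)
    (hρ : spectralRadius ℂ (1 - A * X) < 1)
    (r : ℕ) (hr : 2 ≤ r)
    (Xseq : ℕ → Matrix (Fin n) (Fin n) ℂ) (hX0 : Xseq 0 = X)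
    (hrec : ∀ k, Xseq (k + 1) =
      Xseq k * ∑ l ∈ Finset.range r, (1 - A * Xseq k) ^ l) :
    IsUnit A ∧ Tendsto Xseq atTop (nhds A⁻¹) := by
  letI : NormedAddCommGroup (Matrix (Fin n) (Fin n) ℂ) := Matrix.linftyOpNormedAddCommGroup
  letI : NormedRing (Matrix (Fin n) (Fin n) ℂ) := Matrix.linftyOpNormedRing
  letI : NormedAlgebra ℂ (Matrix (Fin n) (Fin n) ℂ) := Matrix.linftyOpNormedAlgebra
  set E : Matrix (Fin n) (Fin n) ℂ := 1 - A * X with hEdef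
  -- invertibility of A
  have hone : spectralRadius ℂ E < ‖(1 : ℂ)‖₊ := by simpa using hρ
  have hres : (1 : ℂ) ∈ resolventSet ℂ E :=
    spectrum.mem_resolventSet_of_spectralRadius_lt hone
  have hAX : IsUnit (A * X) := by
    have : IsUnit (algebraMap ℂ (Matrix (Fin n) (Fin n) ℂ) 1 - E) := hres
    simpa [hEdef] using this
  have hA : IsUnit A := by
    have hdet : IsUnit ((A * X).det) := (Matrix.isUnit_iff_isUnit_det _).mp hAX
    rw [Matrix.det_mul] at hdet
    exact (Matrix.isUnit_iff_isUnit_det _).mpr (isUnit_of_mul_isUnit_left hdet)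
  have hAdet : IsUnit A.det := (Matrix.isUnit_iff_isUnit_det _).mp hA
  refine ⟨hA, ?_⟩
  -- the error recursion
  have hE : ∀ k, 1 - A * Xseq k = E ^ (r ^ k) := by
    intro k
    induction k with
    | zero => simp [hX0, hEdef]
    | succ k ih =>
      have hmul : A * Xseq (k + 1)
          = (1 - (1 - A * Xseq k)) * ∑ l ∈ Finset.range r, (1 - A * Xseq k) ^ l := by
        rw [hrec k, ← mul_assoc, sub_sub_cancel]
      rw [hmul, mul_neg_geom_sum, sub_sub_cancel, ih, ← pow_mul, ← pow_succ]
  -- closed form for Xseq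
  have hXk : ∀ k, Xseq k = A⁻¹ * (1 - E ^ (r ^ k)) := by
    intro k
    have h1 : A * Xseq k = 1 - E ^ (r ^ k) := by
      rw [← hE k, sub_sub_cancel]
    rw [← h1, ← mul_assoc, Matrix.nonsing_inv_mul A hAdet, one_mul]
  -- convergence
  have hpow : Tendsto (fun m : ℕ => E ^ m) atTop (nhds 0) :=
    pow_tendsto_zero_of_spectralRadius_lt_one E hρ
  have hrk : Tendsto (fun k : ℕ => r ^ k) atTop atTop :=
    tendsto_pow_atTop_atTop_of_one_lt (lt_of_lt_of_le one_lt_two hr)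
  have hEk : Tendsto (fun k : ℕ => E ^ (r ^ k)) atTop (nhds 0) := hpow.comp hrk
  have hfinal : Tendsto (fun k : ℕ => A⁻¹ * (1 - E ^ (r ^ k))) atTop
      (nhds (A⁻¹ * (1 - 0))) :=
    (tendsto_const_nhds.sub hEk).const_mul A⁻¹
  simp only [sub_zero, mul_one] at hfinal
  exact (tendsto_congr fun k => (hXk k).symm).mp hfinal
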